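/- If A and B are real symmetric matrices, μ₁ ≠ μ₂ are real numbers such that A + μ₁B ⪰ 0 and A + μ₂B ⪰ 0, then A and B are simultaneously diagonalizable via congruence. -/

import Mathlib

open Matrix

lemma sdc_psd_row_zero {m : Type*} [Fintype m] [DecidableEq m]
    {M : Matrix m m ℝ} (hM : M.PosSemidef) {i : m} (h : M i i = 0) (k : m) :
    M i k = 0 := by
  have hv := (hM.dotProduct_mulVec_zero_iff (Pi.single i 1)).mp
    (by simpa [Matrix.mulVec_single, Pi.single_apply] using h)
  have hc : M k i = 0 := by simpa [Matrix.mulVec_single] using congrFun hv k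
  have hs := congrFun (congrFun hM.1 i) k
  simp only [conjTranspose_apply, star_trivial] at hs
  rw [← hs]; exact hc

lemma sdc_real_spectral {m : Type*} [Fintype m] [DecidableEq m]
    (M : Matrix m m ℝ) (hM : M.IsHermitian) :
    ∃ V : Matrix m m ℝ, Vᵀ * V = 1 ∧ V * Vᵀ = 1 ∧ Vᵀ * M * V = diagonal hM.eigenvalues := by
  refine ⟨(hM.eigenvectorUnitary : Matrix m m ℝ), ?_, ?_, ?_⟩
  · have := (Matrix.mem_unitaryGroup_iff').mp hM.eigenvectorUnitary.2
    simpa [star_eq_conjTranspose, conjTranspose_eq_transpose_of_trivial] using this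
  · have := (Matrix.mem_unitaryGroup_iff).mp hM.eigenvectorUnitary.2
    simpa [star_eq_conjTranspose, conjTranspose_eq_transpose_of_trivial] using this
  · have := hM.conjStarAlgAut_star_eigenvectorUnitary
    rw [Unitary.conjStarAlgAut_star_apply] at this
    simpa [star_eq_conjTranspose, conjTranspose_eq_transpose_of_trivial] using this

lemma sdc_psd_diag_nonneg {m : Type*} [Fintype m] [DecidableEq m]
    {M : Matrix m m ℝ} (hM : M.PosSemidef) (i : m) : 0 ≤ M i i := by
  simpa [Matrix.mulVec_single, dotProduct, Pi.single_apply] using hM.dotProduct_mulVec_nonneg (Pi.single i 1)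

lemma sdc_psd_pair {m : Type*} [Fintype m] [DecidableEq m]
    (M₁ M₂ : Matrix m m ℝ) (h1 : M₁.PosSemidef) (h2 : M₂.PosSemidef) :
    ∃ P : Matrix m m ℝ, IsUnit P.det ∧ (Pᵀ * M₁ * P).IsDiag ∧ (Pᵀ * M₂ * P).IsDiag := by
  have hS : (M₁ + M₂).PosSemidef := h1.add h2
  obtain ⟨U, hU1, hU2, hU3⟩ := sdc_real_spectral _ hS.isHermitian
  set d : m → ℝ := hS.isHermitian.eigenvalues with hd_def
  have hd : ∀ i, 0 ≤ d i := hS.eigenvalues_nonneg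
  set e : m → ℝ := fun i => if d i = 0 then 1 else (Real.sqrt (d i))⁻¹ with he_def
  have he : ∀ i, e i ≠ 0 := by
    intro i
    by_cases h : d i = 0 <;> simp only [he_def, h, if_true, if_false]
    · norm_num
    · exact inv_ne_zero (by rw [Real.sqrt_ne_zero'] ; exact lt_of_le_of_ne (hd i) (Ne.symm h))
  set j : m → ℝ := fun i => if d i = 0 then 0 else 1 with hj_def
  set q : m → ℝ := fun i => if d i = 0 then 1 else 0 with hq_def
  set P₁ : Matrix m m ℝ := U * diagonal e with hP₁_def
  set N₁ : Matrix m m ℝ := P₁ᵀ * M₁ * P₁ with hN₁_def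
  set N₂ : Matrix m m ℝ := P₁ᵀ * M₂ * P₁ with hN₂_def
  have hP₁T : P₁ᵀ = diagonal e * Uᵀ := by
    rw [hP₁_def, transpose_mul, diagonal_transpose]
  have hN₁p : N₁.PosSemidef := by
    have := h1.conjTranspose_mul_mul_same P₁
    simpa [conjTranspose_eq_transpose_of_trivial] using this
  have hN₂p : N₂.PosSemidef := by
    have := h2.conjTranspose_mul_mul_same P₁
    simpa [conjTranspose_eq_transpose_of_trivial] using this
  have hsum : N₁ + N₂ = diagonal j := by
    have hexp : N₁ + N₂ = P₁ᵀ * (M₁ + M₂) * P₁ := by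
      rw [hN₁_def, hN₂_def, mul_add, add_mul]
    rw [hexp, hP₁T, hP₁_def]
    have : diagonal e * Uᵀ * (M₁ + M₂) * (U * diagonal e)
        = diagonal e * (Uᵀ * (M₁ + M₂) * U) * diagonal e := by
      simp only [Matrix.mul_assoc]
    rw [this, hU3, diagonal_mul_diagonal, diagonal_mul_diagonal]
    apply congrArg
    funext i
    simp only [Pi.mul_apply, he_def, hj_def]
    by_cases h : d i = 0
    · simp [h]
    · simp only [h, if_false]
      rw [show (Real.sqrt (d i))⁻¹ * d i * (Real.sqrt (d i))⁻¹
            = d i / (Real.sqrt (d i) * Real.sqrt (d i)) by ring,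
         Real.mul_self_sqrt (hd i), div_self h]
  -- diagonal entries of N₁, N₂ vanish off the support of d
  have hdiag0 : ∀ i, d i = 0 → N₁ i i = 0 ∧ N₂ i i = 0 := by
    intro i hi
    have hadd : N₁ i i + N₂ i i = 0 := by
      have := congrFun (congrFun hsum i) i
      simpa [Matrix.add_apply, diagonal_apply_eq, hj_def, hi] using this
    have h1' := sdc_psd_diag_nonneg hN₁p i
    have h2' := sdc_psd_diag_nonneg hN₂p i
    constructor <;> linarith
  have hrow1 : ∀ i, d i = 0 → ∀ k, N₁ i k = 0 :=
    fun i hi k => sdc_psd_row_zero hN₁p (hdiag0 i hi).1 k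
  have hrow2 : ∀ i, d i = 0 → ∀ k, N₂ i k = 0 :=
    fun i hi k => sdc_psd_row_zero hN₂p (hdiag0 i hi).2 k
  have hcol1 : ∀ i, d i = 0 → ∀ k, N₁ k i = 0 := by
    intro i hi k
    have := congrFun (congrFun hN₁p.isHermitian i) k
    simp only [conjTranspose_apply, star_trivial] at this
    rw [this]; exact hrow1 i hi k
  set R : Matrix m m ℝ := diagonal j with hR_def
  set Q : Matrix m m ℝ := diagonal q with hQ_def
  have hRQ : R + Q = 1 := by
    rw [hR_def, hQ_def, diagonal_add, ← diagonal_one]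
    apply congrArg; funext i
    by_cases h : d i = 0 <;> simp [hj_def, hq_def, h]
  have hRN₁ : R * N₁ = N₁ := by
    ext i k
    rw [hR_def, diagonal_mul]
    by_cases h : d i = 0
    · simp [hj_def, h, hrow1 i h k]
    · simp [hj_def, h]
  have hN₁R : N₁ * R = N₁ := by
    ext i k
    rw [hR_def, mul_diagonal]
    by_cases h : d k = 0
    · simp [hj_def, h, hcol1 k h i]
    · simp [hj_def, h]
  have hQN₁ : Q * N₁ = 0 := by
    have : Q * N₁ = (R + Q) * N₁ - R * N₁ := by noncomm_ring
    rw [this, hRQ, one_mul, hRN₁, sub_self]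
  have hN₁Q : N₁ * Q = 0 := by
    have : N₁ * Q = N₁ * (R + Q) - N₁ * R := by noncomm_ring
    rw [this, hRQ, mul_one, hN₁R, sub_self]
  have hQQ : Q * Q = Q := by
    rw [hQ_def, diagonal_mul_diagonal]
    apply congrArg; funext i
    by_cases h : d i = 0 <;> simp [hq_def, h]
  have hRQ0 : R * Q = 0 := by
    rw [hR_def, hQ_def, diagonal_mul_diagonal, ← diagonal_zero]
    apply congrArg; funext i
    by_cases h : d i = 0 <;> simp [hj_def, hq_def, h]
  have hQR0 : Q * R = 0 := by
    rw [hR_def, hQ_def, diagonal_mul_diagonal, ← diagonal_zero]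
    apply congrArg; funext i
    by_cases h : d i = 0 <;> simp [hj_def, hq_def, h]
  set W : Matrix m m ℝ := N₁ + (2:ℝ) • Q with hW_def
  have hQH : Q.IsHermitian := by
    show Qᴴ = Q
    rw [hQ_def, diagonal_conjTranspose]
    congr 1
  have hWH : W.IsHermitian := by
    show Wᴴ = W
    rw [hW_def, conjTranspose_add, conjTranspose_smul, hN₁p.isHermitian.eq, hQH.eq]
    norm_num
  obtain ⟨V, hV1, hV2, hV3⟩ := sdc_real_spectral W hWH
  set lam : m → ℝ := hWH.eigenvalues with hlam_def
  have hWV : W * V = V * diagonal lam := by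
    calc W * V = (V * Vᵀ) * W * V := by rw [hV2, one_mul]
    _ = V * (Vᵀ * W * V) := by simp only [Matrix.mul_assoc]
    _ = V * diagonal lam := by rw [hV3]
  have hQW : Q * W = (2:ℝ) • Q := by
    rw [hW_def, mul_add, hQN₁, zero_add, Matrix.mul_smul, hQQ]
  have hWQ : W * Q = (2:ℝ) • Q := by
    rw [hW_def, add_mul, hN₁Q, zero_add, Matrix.smul_mul, hQQ]
  have hRW : R * W = N₁ := by
    rw [hW_def, mul_add, hRN₁, Matrix.mul_smul, hRQ0, smul_zero, add_zero]
  have h1N : ((1 : Matrix m m ℝ) - N₁).PosSemidef := by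
    have heq : (1 : Matrix m m ℝ) - N₁ = Q + N₂ := by
      rw [← hRQ, ← hsum]; abel
    rw [heq, hQ_def]
    refine (Matrix.PosSemidef.diagonal ?_).add hN₂p
    intro i
    by_cases h : d i = 0 <;> simp [hq_def, h]
  -- columns of V are eigenvectors of W
  have hcolW : ∀ l, W *ᵥ (fun t => V t l) = lam l • (fun t => V t l) := by
    intro l
    funext k
    have h1' : (W *ᵥ fun t => V t l) k = (W * V) k l := by
      simp [Matrix.mulVec, Matrix.mul_apply, dotProduct]
    rw [h1', hWV, mul_diagonal]
    simp [mul_comm]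
  have hQcol : ∀ l, lam l ≠ 2 → (Q *ᵥ fun t => V t l) = 0 := by
    intro l hl
    have key : lam l • (Q *ᵥ fun t => V t l) = (2:ℝ) • (Q *ᵥ fun t => V t l) := by
      calc lam l • (Q *ᵥ fun t => V t l) = Q *ᵥ (lam l • fun t => V t l) :=
            (Matrix.mulVec_smul Q _ _).symm
      _ = Q *ᵥ (W *ᵥ fun t => V t l) := by rw [hcolW l]
      _ = (Q * W) *ᵥ (fun t => V t l) := Matrix.mulVec_mulVec _ _ _
      _ = ((2:ℝ) • Q) *ᵥ (fun t => V t l) := by rw [hQW]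
      _ = (2:ℝ) • (Q *ᵥ fun t => V t l) := Matrix.smul_mulVec _ _ _
    have h0 : (lam l - 2) • (Q *ᵥ fun t => V t l) = 0 := by
      rw [sub_smul, key, sub_self]
    rcases smul_eq_zero.mp h0 with h | h
    · exact absurd (sub_eq_zero.mp h) hl
    · exact h
  have hRcol : ∀ l, lam l = 2 → (R *ᵥ fun t => V t l) = 0 := by
    intro l hl
    set w : m → ℝ := R *ᵥ (fun t => V t l) with hw_def
    have hN₁w : N₁ *ᵥ w = (2:ℝ) • w := by
      calc N₁ *ᵥ w = (N₁ * R) *ᵥ (fun t => V t l) := Matrix.mulVec_mulVec _ _ _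
      _ = N₁ *ᵥ (fun t => V t l) := by rw [hN₁R]
      _ = (R * W) *ᵥ (fun t => V t l) := by rw [hRW]
      _ = R *ᵥ (W *ᵥ fun t => V t l) := (Matrix.mulVec_mulVec _ _ _).symm
      _ = R *ᵥ (lam l • fun t => V t l) := by rw [hcolW l]
      _ = lam l • w := Matrix.mulVec_smul _ _ _
      _ = (2:ℝ) • w := by rw [hl]
    have hps := h1N.dotProduct_mulVec_nonneg w
    have hww : dotProduct w w ≤ 0 := by
      have hexp : dotProduct (star w) (((1 : Matrix m m ℝ) - N₁) *ᵥ w)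
          = dotProduct w w - 2 * dotProduct w w := by
        rw [star_trivial, Matrix.sub_mulVec, Matrix.one_mulVec, dotProduct_sub, hN₁w,
          dotProduct_smul]
        simp [smul_eq_mul]
      rw [hexp] at hps
      linarith
    have hwnn : 0 ≤ dotProduct w w :=
      Finset.sum_nonneg fun i _ => mul_self_nonneg (w i)
    exact dotProduct_self_eq_zero.mp (le_antisymm hww hwnn)
  have hQcol2 : ∀ l, lam l = 2 → (Q *ᵥ fun t => V t l) = (fun t => V t l) := by
    intro l hl
    have : Q = 1 - R := by rw [← hRQ]; abel
    rw [this, Matrix.sub_mulVec, Matrix.one_mulVec, hRcol l hl, sub_zero]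
  have hRcol2 : ∀ l, lam l ≠ 2 → (R *ᵥ fun t => V t l) = (fun t => V t l) := by
    intro l hl
    have : R = 1 - Q := by rw [← hRQ]; abel
    rw [this, Matrix.sub_mulVec, Matrix.one_mulVec, hQcol l hl, sub_zero]
  -- entries of congruences by V
  have hent : ∀ (M : Matrix m m ℝ) (k l : m),
      (Vᵀ * M * V) k l = ∑ t, V t k * (M *ᵥ fun s => V s l) t := by
    intro M k l
    have h2 : ∀ t, (M * V) t l = (M *ᵥ fun s => V s l) t := fun t => by
      simp [Matrix.mul_apply, Matrix.mulVec, dotProduct]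
    rw [Matrix.mul_assoc, Matrix.mul_apply]
    simp only [transpose_apply, h2]
  have hVV : ∀ k l : m, k ≠ l → ∑ t, V t k * V t l = 0 := by
    intro k l hkl
    have := congrFun (congrFun hV1 k) l
    simpa [Matrix.mul_apply, transpose_apply, one_apply, hkl] using this
  have hX : (Vᵀ * Q * V).IsDiag := by
    intro k l hkl
    rw [hent]
    by_cases hl : lam l = 2
    · simp only [hQcol2 l hl]
      exact hVV k l hkl
    · simp [hQcol l hl]
  have hY : (Vᵀ * R * V).IsDiag := by
    intro k l hkl
    rw [hent]
    by_cases hl : lam l = 2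
    · simp [hRcol l hl]
    · simp only [hRcol2 l hl]
      exact hVV k l hkl
  have htrans : ∀ M : Matrix m m ℝ, ((P₁ * V)ᵀ * M * (P₁ * V)) = Vᵀ * (P₁ᵀ * M * P₁) * V := by
    intro M
    rw [transpose_mul]
    simp only [Matrix.mul_assoc]
  have hN₁V : Vᵀ * N₁ * V = diagonal lam - (2:ℝ) • (Vᵀ * Q * V) := by
    have hN₁eq : N₁ = W - (2:ℝ) • Q := by rw [hW_def]; abel
    rw [hN₁eq, Matrix.mul_sub, Matrix.sub_mul, hV3, Matrix.mul_smul, Matrix.smul_mul]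
  have hD1 : (Vᵀ * N₁ * V).IsDiag := by
    intro k l hkl
    rw [hN₁V]
    simp [Matrix.sub_apply, Matrix.smul_apply, diagonal_apply_ne _ hkl, hX hkl]
  have hD2 : (Vᵀ * N₂ * V).IsDiag := by
    intro k l hkl
    have hN₂eq : N₂ = R - N₁ := by rw [← hsum]; abel
    have : Vᵀ * N₂ * V = Vᵀ * R * V - Vᵀ * N₁ * V := by
      rw [hN₂eq, Matrix.mul_sub, Matrix.sub_mul]
    rw [this]
    simp [Matrix.sub_apply, hY hkl, hD1 hkl]
  refine ⟨P₁ * V, ?_, ?_, ?_⟩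
  · have hdetU : IsUnit U.det := by
      refine IsUnit.of_mul_eq_one Uᵀ.det ?_
      rw [← det_mul, hU2, det_one]
    have hdetV : IsUnit V.det := by
      refine IsUnit.of_mul_eq_one Vᵀ.det ?_
      rw [← det_mul, hV2, det_one]
    have hdetE : IsUnit (diagonal e).det := by
      rw [det_diagonal]
      exact isUnit_iff_ne_zero.mpr (Finset.prod_ne_zero_iff.mpr fun i _ => he i)
    rw [det_mul, hP₁_def, det_mul]
    exact (hdetU.mul hdetE).mul hdetV
  · rw [htrans, ← hN₁_def]
    exact hD1
  · rw [htrans, ← hN₂_def]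
    exact hD2

/-- If A + μ₁B ⪰ 0 and A + μ₂B ⪰ 0 for μ₁ ≠ μ₂, then A and B are SDC. -/
theorem two_psd_values_imp_sdc {n : ℕ} (A B : Matrix (Fin n) (Fin n) ℝ)
    (hA : A.IsSymm) (hB : B.IsSymm) (μ₁ μ₂ : ℝ) (hne : μ₁ ≠ μ₂)
    (h1 : (A + μ₁ • B).PosSemidef) (h2 : (A + μ₂ • B).PosSemidef) :
    ∃ P : Matrix (Fin n) (Fin n) ℝ, IsUnit P.det ∧
      (Pᵀ * A * P).IsDiag ∧ (Pᵀ * B * P).IsDiag := by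
  obtain ⟨P, hP, hD1, hD2⟩ := sdc_psd_pair (A + μ₁ • B) (A + μ₂ • B) h1 h2
  have hexp : ∀ μ : ℝ, Pᵀ * (A + μ • B) * P = Pᵀ * A * P + μ • (Pᵀ * B * P) := by
    intro μ
    rw [mul_add, Matrix.mul_smul, add_mul, Matrix.smul_mul]
  have key : ∀ k l, k ≠ l → (Pᵀ * A * P) k l = 0 ∧ (Pᵀ * B * P) k l = 0 := by
    intro k l hkl
    have e1 : (Pᵀ * A * P) k l + μ₁ * (Pᵀ * B * P) k l = 0 := by
      have := hD1 hkl
      rw [hexp μ₁] at this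
      simpa [Matrix.add_apply, Matrix.smul_apply, smul_eq_mul] using this
    have e2 : (Pᵀ * A * P) k l + μ₂ * (Pᵀ * B * P) k l = 0 := by
      have := hD2 hkl
      rw [hexp μ₂] at this
      simpa [Matrix.add_apply, Matrix.smul_apply, smul_eq_mul] using this
    have hb : (Pᵀ * B * P) k l = 0 := by
      have h3 : (μ₁ - μ₂) * (Pᵀ * B * P) k l = 0 := by ring_nf; linarith
      exact (mul_eq_zero.mp h3).resolve_left (sub_ne_zero.mpr hne)
    rw [hb, mul_zero, add_zero] at e1
    exact ⟨e1, hb⟩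
  exact ⟨P, hP, fun k l hkl => (key k l hkl).1, fun k l hkl => (key k l hkl).2⟩
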